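/- Fix n ≥ 0. Let W be the free ℤ/2-module with basis ℕ × ℕ × ℤ, and let d : W → W be the ℤ/2-linear map sending a basis element (r,j,t) to (r+1, j−1, t + 2^(n+1) − 1) when j is odd, and to 0 when j is even. Then d ∘ d = 0, and ker d / im d is a free ℤ/2-module with basis the classes of the elements (0, j, t) with j even; in particular ker d / im d ≅ ⊕_{(k,t) ∈ ℕ × ℤ} ℤ/2, corresponding to the coefficients ℤ/2[σ^(−2^(n+1)), a, a⁻¹] of the geometric spectrum Ẽℤ/2 ∧ BPℝ⟨n⟩ (Proposition 4.2). -/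

import Mathlib

/-!
Monomials `v_n^r σ^(−2^n j) a^t` of the E₁-term `ℤ/2[σ^(−2^n), a, a⁻¹][v_n]`
of the spectral sequence computing the coefficients of the geometric spectrum
`Ẽℤ/2 ∧ BPℝ⟨n⟩` are encoded by triples `(r, j, t) ∈ ℕ × ℕ × ℤ`.  `W` is the
free `ℤ/2`-module on these triples, and `d n` encodes the differential
`d₁(v_n^r σ^(−2^n j) a^t) = j · v_n^(r+1) σ^(−2^n (j−1)) a^(t + 2^(n+1) − 1)`.
-/

/-- The free `ℤ/2`-module with basis `ℕ × ℕ × ℤ`. -/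
abbrev W : Type := (ℕ × ℕ × ℤ) →₀ ZMod 2

open Classical in
/-- The `ℤ/2`-linear differential: a basis element `(r, j, t)` is sent to
`(r+1, j−1, t + 2^(n+1) − 1)` when `j` is odd, and to `0` when `j` is even. -/
noncomputable def d (n : ℕ) : W →ₗ[ZMod 2] W :=
  Finsupp.lift W (ZMod 2) (ℕ × ℕ × ℤ) fun x =>
    if Odd x.2.1 then
      Finsupp.single (x.1 + 1, x.2.1 - 1, x.2.2 + 2 ^ (n + 1) - 1) (1 : ZMod 2)
    else 0

/-- The homology `ker (d n) / im (d n)`: the quotient of `ker (d n)` by the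
image of `d n` (viewed as a submodule of `ker (d n)`). -/
abbrev GeomHomology (n : ℕ) : Type :=
  @HasQuotient.Quotient _ _
    (Submodule.hasQuotient (M := LinearMap.ker (d n)) (R := ZMod 2))
    (Submodule.comap (LinearMap.ker (d n)).subtype (LinearMap.range (d n)))

open Classical

/-- A contracting homotopy candidate: shift back. -/
noncomputable def sMap (n : ℕ) : W →ₗ[ZMod 2] W :=
  Finsupp.lift W (ZMod 2) (ℕ × ℕ × ℤ) fun x =>
    if 1 ≤ x.1 ∧ Even x.2.1 then
      Finsupp.single (x.1 - 1, x.2.1 + 1, x.2.2 - 2 ^ (n + 1) + 1) (1 : ZMod 2)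
    else 0

noncomputable def prMap : W →ₗ[ZMod 2] ((ℕ × ℤ) →₀ ZMod 2) :=
  Finsupp.lift _ (ZMod 2) _ fun x =>
    if x.1 = 0 ∧ Even x.2.1 then Finsupp.single (x.2.1 / 2, x.2.2) (1 : ZMod 2) else 0

noncomputable def ioMap : ((ℕ × ℤ) →₀ ZMod 2) →ₗ[ZMod 2] W :=
  Finsupp.lift _ (ZMod 2) _ fun x => Finsupp.single (0, 2 * x.1, x.2) (1 : ZMod 2)

lemma lift_single {α M : Type*} [AddCommMonoid M] [Module (ZMod 2) M]
    (f : α → M) (a : α) (c : ZMod 2) :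
    Finsupp.lift M (ZMod 2) α f (Finsupp.single a c) = c • f a := by
  simp [Finsupp.lift_apply, Finsupp.sum_single_index]

lemma d_single (n : ℕ) (x : ℕ × ℕ × ℤ) (c : ZMod 2) :
    d n (Finsupp.single x c) =
      c • (if Odd x.2.1 then
        Finsupp.single (x.1 + 1, x.2.1 - 1, x.2.2 + 2 ^ (n + 1) - 1) (1 : ZMod 2)
      else 0) := by
  simp [d, lift_single]

lemma sMap_single (n : ℕ) (x : ℕ × ℕ × ℤ) (c : ZMod 2) :
    sMap n (Finsupp.single x c) =
      c • (if 1 ≤ x.1 ∧ Even x.2.1 then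
        Finsupp.single (x.1 - 1, x.2.1 + 1, x.2.2 - 2 ^ (n + 1) + 1) (1 : ZMod 2)
      else 0) := by
  simp [sMap, lift_single]

lemma prMap_single (x : ℕ × ℕ × ℤ) (c : ZMod 2) :
    prMap (Finsupp.single x c) =
      c • (if x.1 = 0 ∧ Even x.2.1 then
        Finsupp.single (x.2.1 / 2, x.2.2) (1 : ZMod 2) else 0) := by
  simp [prMap, lift_single]

lemma ioMap_single (x : ℕ × ℤ) (c : ZMod 2) :
    ioMap (Finsupp.single x c) = Finsupp.single (0, 2 * x.1, x.2) c := by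
  simp [ioMap, lift_single, Finsupp.smul_single]

lemma d_comp_d (n : ℕ) : d n ∘ₗ d n = 0 := by
  apply Finsupp.lhom_ext
  rintro ⟨r, j, t⟩ c
  rcases Nat.even_or_odd j with hj | hj
  · simp [d_single, Nat.not_odd_iff_even.2 hj]
  · have hj' : Even (j - 1) := Nat.Odd.sub_odd hj odd_one
    simp [d_single, hj, Nat.not_odd_iff_even.2 hj']

lemma prMap_comp_d (n : ℕ) : prMap ∘ₗ d n = 0 := by
  apply Finsupp.lhom_ext
  rintro ⟨r, j, t⟩ c
  rcases Nat.even_or_odd j with hj | hj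
  · simp [d_single, Nat.not_odd_iff_even.2 hj]
  · simp [d_single, hj, prMap_single]

lemma d_comp_ioMap (n : ℕ) : d n ∘ₗ ioMap = 0 := by
  apply Finsupp.lhom_ext
  rintro ⟨k, t⟩ c
  simp [ioMap_single, d_single, Nat.not_odd_iff_even.2 (even_two_mul k)]

lemma prMap_comp_ioMap : prMap ∘ₗ ioMap = LinearMap.id := by
  apply Finsupp.lhom_ext
  rintro ⟨k, t⟩ c
  simp [ioMap_single, prMap_single, even_two_mul k, Nat.mul_div_cancel_left,
    Finsupp.smul_single]

lemma homotopy (n : ℕ) :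
    d n ∘ₗ sMap n + sMap n ∘ₗ d n + ioMap ∘ₗ prMap = LinearMap.id := by
  apply Finsupp.lhom_ext
  rintro ⟨r, j, t⟩ c
  rcases Nat.even_or_odd j with hj | hj
  · rcases Nat.eq_zero_or_pos r with hr | hr
    · subst hr
      simp only [LinearMap.add_apply, LinearMap.comp_apply, LinearMap.id_apply]
      rw [d_single, sMap_single, prMap_single]
      have h2 : 2 * (j / 2) = j := Nat.two_mul_div_two_of_even hj
      simp [Nat.not_odd_iff_even.2 hj, hj, ioMap_single, h2, Finsupp.smul_single]
    · simp only [LinearMap.add_apply, LinearMap.comp_apply, LinearMap.id_apply]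
      rw [d_single, sMap_single, prMap_single]
      have hr' : r ≠ 0 := Nat.pos_iff_ne_zero.mp hr
      have hr1 : 1 ≤ r := hr
      have hsa : r - 1 + 1 = r := Nat.succ_pred_eq_of_pos hr
      have ht : t - 2 ^ (n + 1) + 1 + 2 ^ (n + 1) - 1 = t := by ring
      simp [Nat.not_odd_iff_even.2 hj, hj, hr1, hr', d_single,
        Even.add_one hj, hsa, ht, Finsupp.smul_single]
  · simp only [LinearMap.add_apply, LinearMap.comp_apply, LinearMap.id_apply]
    rw [d_single, sMap_single, prMap_single]
    have hj0 : 1 ≤ j := hj.pos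
    have hje : Even (j - 1) := Nat.Odd.sub_odd hj odd_one
    have hjs : j - 1 + 1 = j := Nat.succ_pred_eq_of_pos hj0
    have ht : t + 2 ^ (n + 1) - 1 - 2 ^ (n + 1) + 1 = t := by ring
    have hne : ¬ Even j := Nat.not_even_iff_odd.2 hj
    simp [hj, hne, sMap_single, hje, hjs, ht, Finsupp.smul_single]

section
variable (n : ℕ)

noncomputable def phiBar : GeomHomology n →ₗ[ZMod 2] ((ℕ × ℤ) →₀ ZMod 2) :=
  Submodule.liftQ _ (prMap ∘ₗ (LinearMap.ker (d n)).subtype) (by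
    rintro ⟨x, hx⟩ hmem
    obtain ⟨y, hy⟩ := hmem
    simp only [Submodule.subtype_apply] at hy
    simp only [LinearMap.mem_ker, LinearMap.comp_apply, Submodule.subtype_apply]
    rw [← hy]
    exact congrFun (congrArg DFunLike.coe (prMap_comp_d n)) y)

noncomputable def psiMap : ((ℕ × ℤ) →₀ ZMod 2) →ₗ[ZMod 2] GeomHomology n :=
  (Submodule.mkQ _) ∘ₗ (LinearMap.codRestrict (LinearMap.ker (d n)) ioMap (fun x => by
    simp only [LinearMap.mem_ker]
    exact congrFun (congrArg DFunLike.coe (d_comp_ioMap n)) x))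

lemma phi_psi : phiBar n ∘ₗ psiMap n = LinearMap.id := by
  apply LinearMap.ext; intro x
  show phiBar n (psiMap n x) = x
  simp only [psiMap, LinearMap.comp_apply, phiBar]
  rw [Submodule.mkQ_apply, Submodule.liftQ_apply]
  simp only [LinearMap.comp_apply, Submodule.subtype_apply, LinearMap.codRestrict_apply]
  exact congrFun (congrArg DFunLike.coe prMap_comp_ioMap) x

lemma psi_phi : psiMap n ∘ₗ phiBar n = LinearMap.id := by
  apply Submodule.linearMap_qext
  ext x
  show psiMap n (phiBar n (Submodule.Quotient.mk x)) = Submodule.Quotient.mk x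
  simp only [phiBar, Submodule.liftQ_apply, LinearMap.comp_apply, Submodule.subtype_apply]
  simp only [psiMap, LinearMap.comp_apply, Submodule.mkQ_apply]
  rw [eq_comm, Submodule.Quotient.eq]
  refine ⟨sMap n x.1, ?_⟩
  have hhom := congrFun (congrArg DFunLike.coe (homotopy n)) x.1
  simp only [LinearMap.add_apply, LinearMap.comp_apply, LinearMap.id_apply] at hhom
  have hdx : d n x.1 = 0 := x.2
  rw [hdx, map_zero, add_zero] at hhom
  simp only [Submodule.subtype_apply, AddSubgroupClass.coe_sub,
    LinearMap.codRestrict_apply]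
  exact eq_sub_of_add_eq hhom

noncomputable def eEquiv : GeomHomology n ≃ₗ[ZMod 2] ((ℕ × ℤ) →₀ ZMod 2) :=
  LinearEquiv.ofLinear (phiBar n) (psiMap n) (phi_psi n) (psi_phi n)

end

theorem geometric_spectrum_homology_BPRn (n : ℕ) :
    d n ∘ₗ d n = 0 ∧
    ∃ b : Module.Basis (ℕ × ℤ) (ZMod 2) (GeomHomology n),
      (∀ (k : ℕ) (t : ℤ),
        ∃ h : Finsupp.single ((0 : ℕ), 2 * k, t) (1 : ZMod 2) ∈ LinearMap.ker (d n),
          b (k, t) = Submodule.Quotient.mk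
            ⟨Finsupp.single ((0 : ℕ), 2 * k, t) (1 : ZMod 2), h⟩) ∧
      Nonempty (GeomHomology n ≃ₗ[ZMod 2] ((ℕ × ℤ) →₀ ZMod 2)) := by
  refine ⟨d_comp_d n, Finsupp.basisSingleOne.map (eEquiv n).symm, ?_, ⟨eEquiv n⟩⟩
  intro k t
  have h : Finsupp.single ((0 : ℕ), 2 * k, t) (1 : ZMod 2) ∈ LinearMap.ker (d n) := by
    simp [LinearMap.mem_ker, d_single, Nat.not_odd_iff_even.2 (even_two_mul k)]
  refine ⟨h, ?_⟩
  rw [Module.Basis.map_apply]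
  simp only [Finsupp.coe_basisSingleOne]
  show (eEquiv n).symm (Finsupp.single (k, t) 1) = _
  rw [eEquiv, LinearEquiv.ofLinear_symm_apply]
  simp only [psiMap, LinearMap.comp_apply, Submodule.mkQ_apply]
  congr 1
  apply Subtype.ext
  simp [ioMap_single]
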